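/- Let G = (Σ, root, E) be a rooted directed graph over Σ with no cycle reachable from its root, and let t be a tree. Then G can be simulated in t if and only if there exists an embedding of the unfolding u_G of G in t. -/

import Mathlib

set_option autoImplicit false

universe u v w

/-- An unordered word over an alphabet `σ`: a multiset over `σ`,
viewed as a function giving the number of occurrences of each symbol. -/
def UWord (σ : Type u) : Type u := σ → ℕ

/-- The empty unordered word `ε`. -/
def UWord.zero {σ : Type u} : UWord σ := fun _ => 0

/-- Unordered concatenation (multiset union) of two unordered words. -/
def UWord.add {σ : Type u} (w₁ w₂ : UWord σ) : UWord σ := fun a => w₁ a + w₂ a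

/-- The unordered word consisting of a single occurrence of `a`. -/
def UWord.single {σ : Type u} [DecidableEq σ] (a : σ) : UWord σ :=
  fun b => if b = a then 1 else 0

/-- Unordered concatenation of a list of unordered words. -/
def listSum {σ : Type u} (l : List (UWord σ)) : UWord σ := l.foldr UWord.add UWord.zero

/-- An unordered tree: a finite set of nodes, a root, a labeling with symbols of `σ`,
and an acyclic parent–child relation in which every non-root node has exactly one
parent. -/
structure UTree (σ : Type u) (ν : Type v) : Type (max u v) where
  nodes : Finset ν
  root : ν
  root_mem : root ∈ nodes
  lab : ν → σ
  child : ν → ν → Prop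
  child_mem : ∀ {m n : ν}, child m n → m ∈ nodes ∧ n ∈ nodes
  parent_unique : ∀ n ∈ nodes, n ≠ root → ∃! m : ν, child m n
  acyclic : ∀ n : ν, ¬ Relation.TransGen child n n

/-- The unordered word of (labels of) children of a node of a tree. -/
noncomputable def UTree.childWord {σ : Type u} {ν : Type v} (t : UTree σ ν) (n : ν) :
    UWord σ :=
  fun a => {m : ν | t.child n m ∧ t.lab m = a}.ncard

/-- A twig query: a tree with labels in `σ ∪ {⋆}` (`none` is the wildcard `⋆`) and two
disjoint edge relations, child edges and descendant edges. -/
structure Twig (σ : Type u) (ν : Type v) : Type (max u v) where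
  nodes : Finset ν
  root : ν
  root_mem : root ∈ nodes
  lab : ν → Option σ
  child : ν → ν → Prop
  desc : ν → ν → Prop
  child_mem : ∀ {m n : ν}, child m n → m ∈ nodes ∧ n ∈ nodes
  desc_mem : ∀ {m n : ν}, desc m n → m ∈ nodes ∧ n ∈ nodes
  edges_disjoint : ∀ m n : ν, ¬(child m n ∧ desc m n)
  parent_unique : ∀ n ∈ nodes, n ≠ root → ∃! m : ν, (child m n ∨ desc m n)
  acyclic : ∀ n : ν, ¬ Relation.TransGen (fun x y => child x y ∨ desc x y) n n

/-- `q.Sat t`, written `t ⊨ q`: there exists an embedding of the twig query `q`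
in the tree `t`. -/
def Twig.Sat {σ : Type u} {ν : Type v} {μ : Type w} (q : Twig σ ν) (t : UTree σ μ) :
    Prop :=
  ∃ f : ν → μ,
    f q.root = t.root ∧
    (∀ n ∈ q.nodes, f n ∈ t.nodes) ∧
    (∀ m n : ν, q.child m n → t.child (f m) (f n)) ∧
    (∀ m n : ν, q.desc m n → Relation.TransGen t.child (f m) (f n)) ∧
    (∀ n ∈ q.nodes, q.lab n = none ∨ q.lab n = some (t.lab (f n)))

/-- Embedding of a tree `s` in a tree `t` (viewing `s` as a twig query with only
child edges and no wildcards). -/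
def UTree.EmbedsIn {σ : Type u} {ν : Type v} {μ : Type w} (s : UTree σ ν)
    (t : UTree σ μ) : Prop :=
  ∃ f : ν → μ,
    f s.root = t.root ∧
    (∀ n ∈ s.nodes, f n ∈ t.nodes) ∧
    (∀ m n : ν, s.child m n → t.child (f m) (f n)) ∧
    (∀ n ∈ s.nodes, s.lab n = t.lab (f n))

/-- A rooted directed graph with vertex set `σ`. -/
structure RGraph (σ : Type u) : Type u where
  root : σ
  edge : σ → σ → Prop

/-- `symbols∃(L)`: the symbols present in at least one unordered word of `L`. -/
def symbolsE {σ : Type u} (L : Set (UWord σ)) : Set σ := {a | ∃ w ∈ L, w a ≠ 0}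

/-- `symbols∀(L)`: the symbols present in every unordered word of `L`. -/
def symbolsA {σ : Type u} (L : Set (UWord σ)) : Set σ := {a | ∀ w ∈ L, w a ≠ 0}

/-- A simulation of a rooted directed graph `G` in a tree `t`. -/
def RGraph.SimulatesIn {σ : Type u} {ν : Type v} (G : RGraph σ) (t : UTree σ ν) : Prop :=
  ∃ R : σ → ν → Prop,
    R G.root t.root ∧
    (∀ a : σ, ∀ n : ν, R a n → n ∈ t.nodes) ∧
    (∀ a : σ, ∀ n : ν, R a n → ∀ b : σ, G.edge a b → ∃ n' : ν, t.child n n' ∧ R b n') ∧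
    (∀ a : σ, ∀ n : ν, R a n → t.lab n = a)

/-- The graph `G` has no cycle reachable from its root. -/
def RGraph.NoReachCycle {σ : Type u} (G : RGraph σ) : Prop :=
  ∀ a : σ, Relation.ReflTransGen G.edge G.root a → ¬ Relation.TransGen G.edge a a

/-- A path of `G`: a nonempty sequence of vertices starting at the root such that
consecutive vertices are joined by an edge of `G`. -/
def RGraph.IsPath {σ : Type u} (G : RGraph σ) (l : List σ) : Prop :=
  l ≠ [] ∧ l.head? = some G.root ∧ l.Chain' G.edge

/-- `t` is the unfolding `u_G` of the graph `G`: its nodes are the paths of `G`,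
its root is the one-element path, nodes `p` and `p·a` are joined by a child edge,
and each node is labeled by its last vertex. -/
def RGraph.IsUnfolding {σ : Type u} (G : RGraph σ) (t : UTree σ (List σ)) : Prop :=
  (∀ l : List σ, l ∈ t.nodes ↔ G.IsPath l) ∧
  t.root = [G.root] ∧
  (∀ p q : List σ, t.child p q ↔ (G.IsPath p ∧ G.IsPath q ∧ ∃ a : σ, q = p ++ [a])) ∧
  (∀ p ∈ t.nodes, t.lab p = p.getLastD G.root)

/-- Embedding of a twig query `q` in a rooted directed graph `G`. -/
def Twig.SatGraph {σ : Type u} {ν : Type v} (q : Twig σ ν) (G : RGraph σ) : Prop :=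
  ∃ f : ν → σ,
    f q.root = G.root ∧
    (∀ m n : ν, q.child m n → G.edge (f m) (f n)) ∧
    (∀ m n : ν, q.desc m n → Relation.TransGen G.edge (f m) (f n)) ∧
    (∀ n ∈ q.nodes, q.lab n = none ∨ q.lab n = some (f n))

/-- Embedding of a tree `t` (viewed as a twig query with only child edges)
in a rooted directed graph `G`. -/
def UTree.SatGraph {σ : Type u} {ν : Type v} (t : UTree σ ν) (G : RGraph σ) : Prop :=
  ∃ f : ν → σ,
    f t.root = G.root ∧
    (∀ m n : ν, t.child m n → G.edge (f m) (f n)) ∧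
    (∀ n ∈ t.nodes, t.lab n = f n)


section Aux

variable {σ : Type} {ν : Type}

/-- Auxiliary: lists ending with an element. -/
private lemma chain'_concat_iff {α : Type} (R : α → α → Prop) (l : List α) (a : α) :
    List.Chain' R (l ++ [a]) ↔ List.Chain' R l ∧ ∀ x ∈ l.getLast?, R x a := by
  unfold List.Chain'; rw [List.isChain_append]; simp

private lemma getLast?_eq_getLastD {α : Type} (l : List α) (d : α) (h : l ≠ []) :
    l.getLast? = some (l.getLastD d) := by
  cases l with
  | nil => simp at h
  | cons x xs => simp [List.getLastD_eq_getLast?, List.getLast?_eq_getLast]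

private lemma head?_concat {α : Type} (l : List α) (a : α) (h : l ≠ []) :
    (l ++ [a]).head? = l.head? := by
  cases l with
  | nil => simp at h
  | cons x xs => simp

/-- Path facts. -/
private lemma isPath_concat_elim {G : RGraph σ} {p : List σ} {b : σ}
    (h : G.IsPath (p ++ [b])) (hp : p ≠ []) :
    G.IsPath p ∧ G.edge (p.getLastD G.root) b := by
  obtain ⟨-, hhead, hchain⟩ := h
  rw [head?_concat p b hp] at hhead
  rw [chain'_concat_iff] at hchain
  refine ⟨⟨hp, hhead, hchain.1⟩, ?_⟩
  exact hchain.2 _ (by rw [getLast?_eq_getLastD p G.root hp]; rfl)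

private lemma isPath_concat {G : RGraph σ} {p : List σ} {b : σ}
    (h : G.IsPath p) (he : G.edge (p.getLastD G.root) b) : G.IsPath (p ++ [b]) := by
  obtain ⟨hp, hhead, hchain⟩ := h
  refine ⟨by simp, by rw [head?_concat p b hp]; exact hhead, ?_⟩
  rw [chain'_concat_iff]
  refine ⟨hchain, ?_⟩
  rw [getLast?_eq_getLastD p G.root hp]
  simpa using he

private lemma isPath_root (G : RGraph σ) : G.IsPath [G.root] :=
  ⟨by simp, by simp, List.isChain_singleton _⟩

open Classical in
/-- The embedding built from a simulation, defined on reversed paths. -/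
private noncomputable def embAux (t : UTree σ ν) (R : σ → ν → Prop) : List σ → ν
  | [] => t.root
  | [_] => t.root
  | b :: c :: rest =>
    if h : ∃ n', t.child (embAux t R (c :: rest)) n' ∧ R b n' then h.choose else t.root

open Classical in
private lemma embAux_cons (t : UTree σ ν) (R : σ → ν → Prop) (b : σ) {l : List σ}
    (hl : l ≠ []) :
    embAux t R (b :: l) =
      if h : ∃ n', t.child (embAux t R l) n' ∧ R b n' then h.choose else t.root := by
  cases l with
  | nil => simp at hl
  | cons c rest => rfl

end Aux

/-- Let `G` be a rooted directed graph over `σ` with no cycle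
reachable from its root, and let `t` be a tree.  Then `G` can be simulated in `t`
if and only if there exists an embedding of the unfolding `u_G` of `G` in `t`. -/
theorem statement14 {σ : Type} [Fintype σ] (G : RGraph σ) (hG : G.NoReachCycle)
    (u : UTree σ (List σ)) (hu : G.IsUnfolding u)
    {ν : Type} (t : UTree σ ν) :
    G.SimulatesIn t ↔ u.EmbedsIn t := by
  classical
  obtain ⟨hnodes, hroot, hchild, hlab⟩ := hu
  constructor
  · rintro ⟨R, hR_root, hR_mem, hR_step, hR_lab⟩
    set f : List σ → ν := fun p => embAux t R p.reverse with hf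
    -- key invariant
    have key : ∀ p : List σ, G.IsPath p → R (p.getLastD G.root) (f p) := by
      intro p
      induction p using List.reverseRecOn with
      | nil => intro h; exact absurd rfl h.1
      | append_singleton p b ih =>
        intro h
        by_cases hp : p = []
        · subst hp
          have hb : b = G.root := by simpa using h.2.1
          subst hb
          simpa [hf, embAux] using hR_root
        · obtain ⟨hpath, hedge⟩ := isPath_concat_elim h hp
          have hR := ih hpath
          have hex : ∃ n', t.child (f p) n' ∧ R b n' := hR_step _ _ hR _ hedge
          have : f (p ++ [b]) = if h : ∃ n', t.child (f p) n' ∧ R b n'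
              then h.choose else t.root := by
            simp only [hf, List.reverse_append, List.reverse_singleton,
              List.singleton_append]
            exact embAux_cons t R b (by simpa using hp)
          rw [this, dif_pos hex]
          simpa using hex.choose_spec.2
    have step : ∀ p b, G.IsPath p → G.edge (p.getLastD G.root) b →
        t.child (f p) (f (p ++ [b])) := by
      intro p b hpath hedge
      have hR := key p hpath
      have hex : ∃ n', t.child (f p) n' ∧ R b n' := hR_step _ _ hR _ hedge
      have : f (p ++ [b]) = if h : ∃ n', t.child (f p) n' ∧ R b n'
          then h.choose else t.root := by
        simp only [hf, List.reverse_append, List.reverse_singleton,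
          List.singleton_append]
        exact embAux_cons t R b (by simpa using hpath.1)
      rw [this, dif_pos hex]
      exact hex.choose_spec.1
    refine ⟨f, ?_, ?_, ?_, ?_⟩
    · rw [hroot]; simp [hf, embAux]
    · intro p hp
      have hpath := (hnodes p).1 hp
      exact hR_mem _ _ (key p hpath)
    · intro p q hpq
      obtain ⟨hpath, hqpath, a, rfl⟩ := (hchild p q).1 hpq
      have hedge := (isPath_concat_elim hqpath hpath.1).2
      exact step p a hpath hedge
    · intro p hp
      have hpath := (hnodes p).1 hp
      rw [hlab p hp]
      exact (hR_lab _ _ (key p hpath)).symm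
  · rintro ⟨f, hf_root, hf_mem, hf_child, hf_lab⟩
    refine ⟨fun a n => ∃ p, G.IsPath p ∧ p.getLastD G.root = a ∧ f p = n,
      ⟨[G.root], isPath_root G, by simp, by rw [← hroot]; exact hf_root⟩, ?_, ?_, ?_⟩
    · rintro a n ⟨p, hp, -, rfl⟩
      exact hf_mem p ((hnodes p).2 hp)
    · rintro a n ⟨p, hp, rfl, rfl⟩ b hedge
      have hq : G.IsPath (p ++ [b]) := isPath_concat hp hedge
      have hc : u.child p (p ++ [b]) := (hchild _ _).2 ⟨hp, hq, b, rfl⟩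
      exact ⟨f (p ++ [b]), hf_child _ _ hc, ⟨p ++ [b], hq, by simp, rfl⟩⟩
    · rintro a n ⟨p, hp, rfl, rfl⟩
      have hmem := (hnodes p).2 hp
      rw [← hf_lab p hmem, hlab p hmem]
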